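/- Let G' be a connected simple graph and let G₀ be a subgraph of G' with vertex set V₀ such that every path in G' whose two endpoints both lie in V₀ has all of its vertices and edges in G₀ (adding the nodes and bonds of G' to G₀ creates no new paths between nodes of G₀). Then for all n₀, n₀' ∈ V₀ that are joined by a path inside G₀, the Connes distances agree: dist_C(n₀, n₀'; G₀) = dist_C(n₀, n₀'; G'). (Under this assumption every admissible function on G₀ extends to an admissible function on G'.) -/

import Mathlib

/-- A vertex function `f` is admissible for `G` if `∑_{j ~ i} (f j - f i)² ≤ 1` at every
vertex `i`. -/
def Admissible {V : Type*} (G : SimpleGraph V) [∀ v, Fintype (G.neighborSet v)]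
    (f : V → ℝ) : Prop :=
  ∀ i : V, ∑ j ∈ G.neighborFinset i, (f j - f i) ^ 2 ≤ 1

/-- The Connes distance: the supremum of `|f n' - f n|` over admissible functions `f`. -/
noncomputable def distC {V : Type*} (G : SimpleGraph V) [∀ v, Fintype (G.neighborSet v)]
    (n n' : V) : ℝ :=
  sSup {r : ℝ | ∃ f : V → ℝ, Admissible G f ∧ r = |f n' - f n|}

/-- If `G₀` is a subgraph of a connected graph `G'` such that every path of `G'` with both
endpoints in `G₀` has all its vertices and edges in `G₀`, then the Connes distances computed
in `G₀` and in `G'` agree for vertices of `G₀` joined by a path inside `G₀`. -/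
theorem stmt_13 {V : Type*} (G' : SimpleGraph V) [∀ v, Fintype (G'.neighborSet v)]
    (hG' : G'.Connected) (G₀ : G'.Subgraph)
    [∀ v : G₀.verts, Fintype (G₀.coe.neighborSet v)]
    (hpath : ∀ (u v : V), u ∈ G₀.verts → v ∈ G₀.verts →
      ∀ w : G'.Walk u v, w.IsPath →
        (∀ x ∈ w.support, x ∈ G₀.verts) ∧ (∀ e ∈ w.edges, e ∈ G₀.edgeSet))
    (n₀ n₀' : V) (hn₀ : n₀ ∈ G₀.verts) (hn₀' : n₀' ∈ G₀.verts)
    (hreach : G₀.coe.Reachable ⟨n₀, hn₀⟩ ⟨n₀', hn₀'⟩) :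
    distC G₀.coe ⟨n₀, hn₀⟩ ⟨n₀', hn₀'⟩ = distC G' n₀ n₀' := by
  classical
  -- Key fact: any G'-edge between two vertices of G₀ is an edge of G₀.
  have hedge : ∀ {u v : V}, u ∈ G₀.verts → v ∈ G₀.verts → G'.Adj u v → G₀.Adj u v := by
    intro u v hu hv hadj
    have hp : (SimpleGraph.Walk.cons hadj SimpleGraph.Walk.nil).IsPath := by
      simp [SimpleGraph.Walk.isPath_def, hadj.ne]
    have := (hpath u v hu hv _ hp).2 s(u, v) (by simp)
    exact this
  -- existence of an "attachment" vertex for every vertex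
  have hex : ∀ x : V, ∃ u : V, u ∈ G₀.verts ∧
      ∃ p : G'.Walk x u, ∀ y ∈ p.support, y ∈ G₀.verts → y = u := by
    have key : ∀ {x z : V} (w : G'.Walk x z), z ∈ G₀.verts → ∃ u : V, u ∈ G₀.verts ∧
        ∃ p : G'.Walk x u, ∀ y ∈ p.support, y ∈ G₀.verts → y = u := by
      intro x z w
      induction w with
      | nil => exact fun hz => ⟨_, hz, SimpleGraph.Walk.nil, by simp⟩
      | @cons a b c h w ih =>
        intro hz
        by_cases ha : a ∈ G₀.verts
        · exact ⟨a, ha, SimpleGraph.Walk.nil, by simp⟩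
        · obtain ⟨u, hu, p, hp⟩ := ih hz
          refine ⟨u, hu, SimpleGraph.Walk.cons h p, ?_⟩
          intro y hy hyV
          rw [SimpleGraph.Walk.support_cons, List.mem_cons] at hy
          rcases hy with rfl | hy'
          · exact absurd hyV ha
          · exact hp y hy' hyV
    intro x
    obtain ⟨w⟩ := hG' x n₀
    exact key w hn₀
  choose a haV pw hpw using hex
  -- uniqueness of the attachment vertex
  have huniq : ∀ (x u : V), u ∈ G₀.verts →
      (∃ p : G'.Walk x u, ∀ y ∈ p.support, y ∈ G₀.verts → y = u) → u = a x := by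
    intro x u hu ⟨p, hp⟩
    by_contra hne
    set q := pw x with hq
    have hqprop := hpw x
    set w : G'.Walk u (a x) := p.reverse.append q with hw
    have hsupw : ∀ y ∈ w.support, y ∈ G₀.verts → y = u ∨ y = a x := by
      intro y hy hyV
      rw [hw, SimpleGraph.Walk.mem_support_append_iff] at hy
      rcases hy with hy | hy
      · rw [SimpleGraph.Walk.support_reverse, List.mem_reverse] at hy
        exact Or.inl (hp y hy hyV)
      · exact Or.inr (hqprop y hy hyV)
    have hbp := (hpath u (a x) hu (haV x) w.bypass w.bypass_isPath).1
    -- bypass support is contained in {u, a x}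
    have hbsup : ∀ y ∈ w.bypass.support, y = u ∨ y = a x := fun y hy =>
      hsupw y (w.support_bypass_subset hy) (hbp y hy)
    -- analyze the bypass
    have hedge_uv : s(u, a x) ∈ w.edges := by
      cases hbpc : w.bypass with
      | nil => exact (hne rfl).elim
      | @cons _ y _ h q' =>
        have hpath' : (SimpleGraph.Walk.cons h q').IsPath := hbpc ▸ w.bypass_isPath
        have hu_not : u ∉ q'.support := by
          have := hpath'.support_nodup
          simp only [SimpleGraph.Walk.support_cons, List.nodup_cons] at this
          exact this.1
        have hy : y = a x := by
          have hy1 := hbsup y (by rw [hbpc]; simp [SimpleGraph.Walk.support_cons])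
          rcases hy1 with rfl | rfl
          · exact absurd q'.start_mem_support hu_not
          · rfl
        subst hy
        apply w.edges_bypass_subset
        rw [hbpc]
        simp [SimpleGraph.Walk.edges_cons]
    rw [hw, SimpleGraph.Walk.edges_append, List.mem_append] at hedge_uv
    rcases hedge_uv with he | he
    · rw [SimpleGraph.Walk.edges_reverse, List.mem_reverse] at he
      have : a x ∈ p.support := SimpleGraph.Walk.snd_mem_support_of_mem_edges p he
      exact hne ((hp _ this (haV x)).symm)
    · have : u ∈ q.support := SimpleGraph.Walk.fst_mem_support_of_mem_edges q he
      exact hne (hqprop u this hu)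
  -- a x = x for x ∈ G₀.verts
  have haself : ∀ x : V, x ∈ G₀.verts → a x = x := by
    intro x hx
    exact (huniq x x hx ⟨SimpleGraph.Walk.nil, by simp⟩).symm
  -- attachments of neighbors
  have hadj_out : ∀ {i j : V}, i ∈ G₀.verts → j ∉ G₀.verts → G'.Adj i j → a j = i := by
    intro i j hi hj hadj
    refine (huniq j i hi ⟨SimpleGraph.Walk.cons hadj.symm SimpleGraph.Walk.nil, ?_⟩).symm
    intro y hy hyV
    simp only [SimpleGraph.Walk.support_cons, SimpleGraph.Walk.support_nil,
      List.mem_cons, List.mem_singleton] at hy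
    rcases hy with rfl | rfl | h
    · exact absurd hyV hj
    · rfl
    · exact absurd h List.not_mem_nil
  have hadj_outout : ∀ {i j : V}, i ∉ G₀.verts → G'.Adj i j → a i = a j := by
    intro i j hi hadj
    refine (huniq i (a j) (haV j) ⟨SimpleGraph.Walk.cons hadj (pw j), ?_⟩).symm
    intro y hy hyV
    rw [SimpleGraph.Walk.support_cons, List.mem_cons] at hy
    rcases hy with rfl | hy'
    · exact absurd hyV hi
    · exact hpw j y hy' hyV
  -- the two sets of values coincide
  have hsets : {r : ℝ | ∃ f : G₀.verts → ℝ, Admissible G₀.coe f ∧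
        r = |f ⟨n₀', hn₀'⟩ - f ⟨n₀, hn₀⟩|}
      = {r : ℝ | ∃ f : V → ℝ, Admissible G' f ∧ r = |f n₀' - f n₀|} := by
    ext r
    constructor
    · rintro ⟨f, hf, rfl⟩
      -- extend f to all of V
      set F : V → ℝ := fun x => if h : x ∈ G₀.verts then f ⟨x, h⟩ else f ⟨a x, haV x⟩ with hF
      have hFverts : ∀ (x : V) (hx : x ∈ G₀.verts), F x = f ⟨x, hx⟩ := by
        intro x hx; simp [hF, hx]
      refine ⟨F, ?_, by rw [hFverts n₀' hn₀', hFverts n₀ hn₀]⟩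
      intro i
      by_cases hi : i ∈ G₀.verts
      · -- terms with j ∉ G₀.verts vanish
        have hzero : ∀ j ∈ (G'.neighborFinset i).filter (fun j => j ∉ G₀.verts),
            (F j - F i) ^ 2 = 0 := by
          intro j hj
          rw [Finset.mem_filter, SimpleGraph.mem_neighborFinset] at hj
          have haj : a j = i := hadj_out hi hj.2 hj.1
          have : F j = F i := by
            rw [hFverts i hi]
            simp only [hF]
            rw [dif_neg hj.2]
            exact congrArg f (Subtype.ext haj)
          rw [this]; ring
        have hsplit : ∑ j ∈ G'.neighborFinset i, (F j - F i) ^ 2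
            = ∑ j ∈ (G'.neighborFinset i).filter (fun j => j ∈ G₀.verts),
                (F j - F i) ^ 2 := by
          rw [← Finset.sum_filter_add_sum_filter_not (G'.neighborFinset i)
            (fun j => j ∈ G₀.verts)]
          rw [Finset.sum_eq_zero hzero, add_zero]
        rw [hsplit]
        -- identify with the sum in G₀
        have himg : (G'.neighborFinset i).filter (fun j => j ∈ G₀.verts)
            = (G₀.coe.neighborFinset ⟨i, hi⟩).image Subtype.val := by
          ext j
          simp only [Finset.mem_filter, Finset.mem_image, SimpleGraph.mem_neighborFinset]
          constructor
          · rintro ⟨hadj, hj⟩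
            exact ⟨⟨j, hj⟩, hedge hi hj hadj, rfl⟩
          · rintro ⟨⟨j', hj'⟩, hadj, rfl⟩
            exact ⟨G₀.adj_sub hadj, hj'⟩
        rw [himg, Finset.sum_image (fun x _ y _ h => Subtype.val_injective h)]
        have : ∀ j ∈ G₀.coe.neighborFinset ⟨i, hi⟩,
            (F j.1 - F i) ^ 2 = (f j - f ⟨i, hi⟩) ^ 2 := by
          intro j _
          rw [hFverts i hi, hFverts j.1 j.2, Subtype.eta]
        rw [Finset.sum_congr rfl this]
        exact hf ⟨i, hi⟩
      · -- all terms vanish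
        have : ∑ j ∈ G'.neighborFinset i, (F j - F i) ^ 2 = 0 := by
          apply Finset.sum_eq_zero
          intro j hj
          rw [SimpleGraph.mem_neighborFinset] at hj
          have : F j = F i := by
            by_cases hjv : j ∈ G₀.verts
            · have hai : a i = j := hadj_out hjv hi hj.symm
              rw [hFverts j hjv]
              simp only [hF]
              rw [dif_neg hi]
              exact congrArg f (Subtype.ext hai.symm)
            · simp only [hF]
              rw [dif_neg hi, dif_neg hjv]
              exact congrArg f (Subtype.ext (hadj_outout hi hj).symm)
          rw [this]; ring
        rw [this]; norm_num
    · rintro ⟨f, hf, rfl⟩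
      refine ⟨fun x => f x.1, ?_, rfl⟩
      intro i
      calc ∑ j ∈ G₀.coe.neighborFinset i, (f j.1 - f i.1) ^ 2
          = ∑ j ∈ (G₀.coe.neighborFinset i).image Subtype.val, (f j - f i.1) ^ 2 := by
            rw [Finset.sum_image (fun x _ y _ h => Subtype.val_injective h)]
        _ ≤ ∑ j ∈ G'.neighborFinset i.1, (f j - f i.1) ^ 2 := by
            apply Finset.sum_le_sum_of_subset_of_nonneg
            · intro j hj
              simp only [Finset.mem_image, SimpleGraph.mem_neighborFinset] at hj ⊢
              obtain ⟨j', hadj, rfl⟩ := hj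
              exact G₀.adj_sub hadj
            · intro j _ _; positivity
        _ ≤ 1 := hf i.1
  unfold distC
  rw [hsets]
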